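/- Let e ∈ 𝔽(r₁,r₂), viewed inside L(r₁,r₂), and let L(e) be its locator ideal. Then the defining set of L(e) is exactly the support of e: D_α(L(e)) = supp(e). -/

import Mathlib

/-- A monomial order on ℕ × ℕ: a linear order compatible with addition
for which (0,0) is the least element. -/
structure MonOrd where
  le : ℕ × ℕ → ℕ × ℕ → Prop
  refl : ∀ a, le a a
  trans : ∀ a b c, le a b → le b c → le a c
  antisymm : ∀ a b, le a b → le b a → a = b
  total : ∀ a b, le a b ∨ le b a
  add_right : ∀ a b c, le a b → le (a + c) (b + c)
  zero_le : ∀ a, le (0, 0) a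

/-- Strict version of a monomial order. -/
def MonOrd.lt (T : MonOrd) (a b : ℕ × ℕ) : Prop := T.le a b ∧ a ≠ b

/-- `s` is the leading power product exponent of `f` w.r.t. `T`. -/
def IsLP {L : Type} [Field L] (T : MonOrd) (f : (ℕ × ℕ) →₀ L) (s : ℕ × ℕ) : Prop :=
  s ∈ f.support ∧ ∀ m ∈ f.support, T.le m s

/-- `f[U]_n`, computed with respect to a given leading exponent `s` of `f`. -/
noncomputable def fApp {L : Type} [Field L] (U : ℕ × ℕ → L) (f : (ℕ × ℕ) →₀ L)
    (s n : ℕ × ℕ) : L :=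
  if s.1 ≤ n.1 ∧ s.2 ≤ n.2 then
    ∑ m ∈ f.support, f m * U (m.1 + n.1 - s.1, m.2 + n.2 - s.2)
  else 0

/-- `f` generates the doubly periodic array `U`. -/
def GeneratesU {L : Type} [Field L] (T : MonOrd) (U : ℕ × ℕ → L) (f : (ℕ × ℕ) →₀ L) : Prop :=
  ∃ s, IsLP T f s ∧ ∀ n, fApp U f s n = 0

/-- `f` generates the finite subarray `u^l` of `U`. -/
def GeneratesUpTo {L : Type} [Field L] (T : MonOrd) (U : ℕ × ℕ → L) (l : ℕ × ℕ)
    (f : (ℕ × ℕ) →₀ L) : Prop :=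
  ∃ s, IsLP T f s ∧ ∀ k, s.1 ≤ k.1 → s.2 ≤ k.2 → T.lt k l → fApp U f s k = 0

/-- `U` is a doubly periodic array of period r₁ × r₂. -/
def DoublyPeriodic {L : Type} (r₁ r₂ : ℕ) (U : ℕ × ℕ → L) : Prop :=
  ∀ n m : ℕ × ℕ, n.1 % r₁ = m.1 % r₁ → n.2 % r₂ = m.2 % r₂ → U n = U m

/-- Evaluation of a bivariate polynomial at a point `(x, y)`. -/
noncomputable def polyEval {L : Type} [Field L] (f : (ℕ × ℕ) →₀ L) (x y : L) : L :=
  ∑ m ∈ f.support, f m * x ^ m.1 * y ^ m.2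

/-- The syndrome table afforded by `τ` and `e`:  `u_n = e(α^(τ+n))`. -/
noncomputable def synTable {F L : Type} [Field F] [Field L] [Algebra F L] {r₁ r₂ : ℕ}
    (α₁ α₂ : L) (τ : Fin r₁ × Fin r₂) (e : Fin r₁ × Fin r₂ → F) : ℕ × ℕ → L :=
  fun n => ∑ p : Fin r₁ × Fin r₂,
    algebraMap F L (e p) * (α₁ ^ ((τ.1 : ℕ) + n.1)) ^ (p.1 : ℕ)
      * (α₂ ^ ((τ.2 : ℕ) + n.2)) ^ (p.2 : ℕ)

/-- The weight ω(e): number of nonzero coefficients. -/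
noncomputable def wt {F : Type} [Field F] {r₁ r₂ : ℕ} (e : Fin r₁ × Fin r₂ → F) : ℕ :=
  {p | e p ≠ 0}.ncard

/-- The hyperbolic set B(δ) of amplitude δ inside {0,…,r₁−1} × {0,…,r₂−1}. -/
def hypB (r₁ r₂ δ : ℕ) : Set (ℕ × ℕ) :=
  {l | l.1 < r₁ ∧ l.2 < r₂ ∧ (l.1 + 1) * (l.2 + 1) ≤ δ ∧ l ≠ (δ - 1, 0) ∧ l ≠ (0, δ - 1)}

/-- The border set 𝔉 = {l ∈ B(2t+1) : 2t ≤ (l₁+1)(l₂+1)}. -/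
def frontF (r₁ r₂ t : ℕ) : Set (ℕ × ℕ) :=
  {l ∈ hypB r₁ r₂ (2 * t + 1) | 2 * t ≤ (l.1 + 1) * (l.2 + 1)}

/-- The lexicographic order with X₁ > X₂. -/
def lexMonOrd : MonOrd where
  le a b := a.1 < b.1 ∨ (a.1 = b.1 ∧ a.2 ≤ b.2)
  refl a := by omega
  trans a b c h1 h2 := by omega
  antisymm a b h1 h2 := by
    obtain ⟨a1, a2⟩ := a; obtain ⟨b1, b2⟩ := b
    simp_all only [Prod.mk.injEq]; omega
  total a b := by omega
  add_right a b c h := by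
    obtain ⟨a1, a2⟩ := a; obtain ⟨b1, b2⟩ := b; obtain ⟨c1, c2⟩ := c
    simp_all only [Prod.mk_add_mk]; omega
  zero_le a := by
    obtain ⟨a1, a2⟩ := a; simp only []; omega

/-- The (reverse) graded order with X₂ > X₁. -/
def grMonOrd : MonOrd where
  le a b := a.1 + a.2 < b.1 + b.2 ∨ (a.1 + a.2 = b.1 + b.2 ∧ a.2 ≤ b.2)
  refl a := by omega
  trans a b c h1 h2 := by omega
  antisymm a b h1 h2 := by
    obtain ⟨a1, a2⟩ := a; obtain ⟨b1, b2⟩ := b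
    simp_all only [Prod.mk.injEq]; omega
  total a b := by omega
  add_right a b c h := by
    obtain ⟨a1, a2⟩ := a; obtain ⟨b1, b2⟩ := b; obtain ⟨c1, c2⟩ := c
    simp_all only [Prod.mk_add_mk]; omega
  zero_le a := by
    obtain ⟨a1, a2⟩ := a; simp only []; omega

/-- The ideal (X₁^{r₁} − 1, X₂^{r₂} − 1) of L[X₁,X₂]. -/
noncomputable def periodIdeal (L : Type) [Field L] (r₁ r₂ : ℕ) :
    Ideal (AddMonoidAlgebra L (ℕ × ℕ)) :=
  Ideal.span {AddMonoidAlgebra.single (r₁, 0) 1 - 1, AddMonoidAlgebra.single (0, r₂) 1 - 1}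

/-- Evaluation algebra homomorphism at a point `(x, y)`. -/
noncomputable def evalHom (L : Type) [Field L] (x y : L) :
    AddMonoidAlgebra L (ℕ × ℕ) →ₐ[L] L :=
  AddMonoidAlgebra.lift L L (ℕ × ℕ)
    { toFun := fun m => x ^ (Multiplicative.toAdd m).1 * y ^ (Multiplicative.toAdd m).2
      map_one' := by simp
      map_mul' := fun a b => by
        simp only [toAdd_mul, Prod.fst_add, Prod.snd_add, pow_add]
        ring }

lemma evalHom_single {L : Type} [Field L] (x y : L) (m : ℕ × ℕ) (c : L) :
    evalHom L x y (AddMonoidAlgebra.single m c) = c * (x ^ m.1 * y ^ m.2) := by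
  rw [evalHom, AddMonoidAlgebra.lift_single]
  simp [smul_eq_mul]

lemma polyEval_eq_evalHom {L : Type} [Field L] (f : AddMonoidAlgebra L (ℕ × ℕ)) (x y : L) :
    polyEval f.coeff x y = evalHom L x y f := by
  rw [evalHom, AddMonoidAlgebra.lift_apply, polyEval, Finsupp.sum]
  exact Finset.sum_congr rfl fun m hm => by simp [smul_eq_mul, mul_assoc]

lemma polyEval_congr {L : Type} [Field L] {r₁ r₂ : ℕ} (x y : L)
    (hx : x ^ r₁ = 1) (hy : y ^ r₂ = 1)
    {h h' : AddMonoidAlgebra L (ℕ × ℕ)}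
    (hhh : Ideal.Quotient.mk (periodIdeal L r₁ r₂) h =
      Ideal.Quotient.mk (periodIdeal L r₁ r₂) h') :
    polyEval h.coeff x y = polyEval h'.coeff x y := by
  rw [Ideal.Quotient.mk_eq_mk_iff_sub_mem] at hhh
  have hker : periodIdeal L r₁ r₂ ≤ RingHom.ker (evalHom L x y).toRingHom := by
    rw [periodIdeal, Ideal.span_le]
    intro f hf
    simp only [Set.mem_insert_iff, Set.mem_singleton_iff] at hf
    rcases hf with rfl | rfl <;>
      simp [RingHom.mem_ker, evalHom_single, hx, hy]
  have hk := hker hhh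
  rw [RingHom.mem_ker] at hk
  simp only [AlgHom.toRingHom_eq_coe, RingHom.coe_coe, map_sub, sub_eq_zero] at hk
  rw [polyEval_eq_evalHom, polyEval_eq_evalHom]
  exact hk

/-- the defining set of the locator ideal L(e) is exactly supp(e). -/
theorem defining_set_of_locator_eq_support
    (q : ℕ) (hq : IsPrimePow q)
    (F : Type) [Field F] [Fintype F] (hF : Fintype.card F = q)
    (L : Type) [Field L] [Algebra F L]
    (r₁ r₂ : ℕ) (hr₁ : 0 < r₁) (hr₂ : 0 < r₂) (hco : Nat.Coprime q (r₁ * r₂))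
    (α₁ α₂ : L) (hα₁ : IsPrimitiveRoot α₁ r₁) (hα₂ : IsPrimitiveRoot α₂ r₂)
    (e : Fin r₁ × Fin r₂ → F) :
    {p : Fin r₁ × Fin r₂ |
        ∀ g ∈ {g' : AddMonoidAlgebra L (ℕ × ℕ) ⧸ periodIdeal L r₁ r₂ |
            ∀ h : AddMonoidAlgebra L (ℕ × ℕ),
              Ideal.Quotient.mk (periodIdeal L r₁ r₂) h = g' →
                ∀ p' : Fin r₁ × Fin r₂, e p' ≠ 0 →
                  polyEval h.coeff (α₁ ^ (p'.1 : ℕ)) (α₂ ^ (p'.2 : ℕ)) = 0},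
          ∀ h : AddMonoidAlgebra L (ℕ × ℕ), Ideal.Quotient.mk (periodIdeal L r₁ r₂) h = g →
            polyEval h.coeff (α₁ ^ (p.1 : ℕ)) (α₂ ^ (p.2 : ℕ)) = 0} =
      {p : Fin r₁ × Fin r₂ | e p ≠ 0} := by
  classical
  ext p
  simp only [Set.mem_setOf_eq]
  constructor
  · intro hp
    by_contra hep
    -- the vanishing factor associated to a point p'
    set factor : Fin r₁ × Fin r₂ → AddMonoidAlgebra L (ℕ × ℕ) := fun p' =>
      if p'.1 = p.1 then
        AddMonoidAlgebra.single (0, 1) 1 - algebraMap L _ (α₂ ^ (p'.2 : ℕ))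
      else
        AddMonoidAlgebra.single (1, 0) 1 - algebraMap L _ (α₁ ^ (p'.1 : ℕ)) with hfactor
    set S : Finset (Fin r₁ × Fin r₂) := Finset.univ.filter (fun p' => e p' ≠ 0) with hS
    set h : AddMonoidAlgebra L (ℕ × ℕ) := ∏ p' ∈ S, factor p' with hh
    have heval : ∀ p'' : Fin r₁ × Fin r₂,
        evalHom L (α₁ ^ (p''.1 : ℕ)) (α₂ ^ (p''.2 : ℕ)) h =
          ∏ p' ∈ S, (if p'.1 = p.1 then α₂ ^ (p''.2 : ℕ) - α₂ ^ (p'.2 : ℕ)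
            else α₁ ^ (p''.1 : ℕ) - α₁ ^ (p'.1 : ℕ)) := by
      intro p''
      rw [hh, map_prod]
      refine Finset.prod_congr rfl fun p' _ => ?_
      rw [hfactor]
      by_cases hc : p'.1 = p.1 <;>
        simp [hc, evalHom_single, AlgHom.commutes]
    have hx : ∀ a : Fin r₁, (α₁ ^ (a : ℕ)) ^ r₁ = 1 := fun a => by
      rw [← pow_mul, mul_comm, pow_mul, hα₁.pow_eq_one, one_pow]
    have hy : ∀ b : Fin r₂, (α₂ ^ (b : ℕ)) ^ r₂ = 1 := fun b => by
      rw [← pow_mul, mul_comm, pow_mul, hα₂.pow_eq_one, one_pow]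
    -- mk h belongs to the locator ideal set
    have hg : (Ideal.Quotient.mk (periodIdeal L r₁ r₂) h) ∈
        {g' : AddMonoidAlgebra L (ℕ × ℕ) ⧸ periodIdeal L r₁ r₂ |
            ∀ h' : AddMonoidAlgebra L (ℕ × ℕ),
              Ideal.Quotient.mk (periodIdeal L r₁ r₂) h' = g' →
                ∀ p' : Fin r₁ × Fin r₂, e p' ≠ 0 →
                  polyEval h'.coeff (α₁ ^ (p'.1 : ℕ)) (α₂ ^ (p'.2 : ℕ)) = 0} := by
      intro h' hh' p'' hp''
      rw [polyEval_congr (α₁ ^ (p''.1 : ℕ)) (α₂ ^ (p''.2 : ℕ)) (hx _) (hy _) hh']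
      rw [polyEval_eq_evalHom, heval]
      refine Finset.prod_eq_zero (i := p'') (by simp [hS, hp'']) ?_
      by_cases hc : p''.1 = p.1 <;> simp [hc]
    have h0 := hp _ hg h rfl
    rw [polyEval_eq_evalHom, heval] at h0
    -- but the product is nonzero at p
    have hne : ∀ p' ∈ S, (if p'.1 = p.1 then α₂ ^ (p.2 : ℕ) - α₂ ^ (p'.2 : ℕ)
        else α₁ ^ (p.1 : ℕ) - α₁ ^ (p'.1 : ℕ)) ≠ 0 := by
      intro p' hp'
      have hep' : e p' ≠ 0 := (Finset.mem_filter.mp hp').2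
      have hpp' : p' ≠ p := fun hcon => hep' (hcon ▸ hep)
      by_cases hc : p'.1 = p.1
      · have h2 : (p'.2 : ℕ) ≠ (p.2 : ℕ) := by
          intro hcon
          exact hpp' (Prod.ext hc (Fin.ext hcon))
        rw [if_pos hc, sub_ne_zero]
        intro hcon
        exact h2 (hα₂.pow_inj p.2.isLt p'.2.isLt hcon).symm
      · rw [if_neg hc, sub_ne_zero]
        intro hcon
        exact hc (Fin.ext (hα₁.pow_inj p.1.isLt p'.1.isLt hcon)).symm
    exact Finset.prod_ne_zero_iff.mpr hne h0
  · intro hep g hg h' hh'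
    exact hg h' hh' p hep
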